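/- Let m be a finite measure on a measurable space X. The sublevel sets {ν : H(ν | m) ≤ C} of the relative entropy, for each real C, are compact in the weak topology on the space of finite measures on X: the family of densities {dν/dm : H(ν|m) ≤ C} is uniformly integrable in L¹(m), hence weakly sequentially compact. -/

import Mathlib

open MeasureTheory
open scoped Classical ENNReal

/-- The relative entropy `H(ν | m) = ∫ (g log g - g + 1) dm` with `g = dν/dm` when `ν ≪ m`,
and `+∞` otherwise, as a value in `ℝ≥0∞` (the integrand is nonnegative). -/
noncomputable def relEnt {X : Type*} [MeasurableSpace X] (ν m : Measure X) : ℝ≥0∞ :=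
  if ν ≪ m then
    ∫⁻ x, ENNReal.ofReal
      ((ν.rnDeriv m x).toReal * Real.log (ν.rnDeriv m x).toReal
        - (ν.rnDeriv m x).toReal + 1) ∂m
  else ⊤

set_option maxHeartbeats 1000000

namespace RelEntAux
open Set Filter Topology
open scoped BoundedContinuousFunction
variable {X : Type*} [MeasurableSpace X]


/-- The entropy integrand. -/
noncomputable def phi (t : ℝ) : ℝ := t * Real.log t - t + 1

lemma phi_continuous : Continuous phi := by
  refine Continuous.congr ((Real.continuous_mul_log.sub continuous_id).add (continuous_const (y := (1:ℝ))))
    (fun t => ?_)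
  simp [phi]

lemma phi_nonneg {t : ℝ} (ht : 0 ≤ t) : 0 ≤ phi t := by
  rcases eq_or_lt_of_le ht with rfl | ht
  · simp [phi]
  · have h1 : Real.log t⁻¹ ≤ t⁻¹ - 1 := Real.log_le_sub_one_of_pos (by positivity)
    rw [Real.log_inv] at h1
    have h2 : t * (1 - t⁻¹) ≤ t * Real.log t := by nlinarith
    have h3 : t * (1 - t⁻¹) = t - 1 := by field_simp
    simp only [phi]; nlinarith

lemma phi_convexOn : ConvexOn ℝ (Set.Ici 0) phi := by
  have h1 : ConvexOn ℝ (Set.Ici 0) (fun t : ℝ => t * Real.log t) := Real.convexOn_mul_log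
  have h2 : ConvexOn ℝ (Set.Ici 0) (fun t : ℝ => -t + 1) := by
    refine ⟨convex_Ici 0, ?_⟩
    intro x _ y _ a b _ _ hab
    simp only [smul_eq_mul]; nlinarith
  have := h1.add h2
  refine this.congr (fun t _ => ?_)
  simp only [phi, Pi.add_apply]; ring

/-- Lower bound for large arguments: if `exp (j+2) ≤ t` then `t * (j+1) ≤ phi t`. -/
lemma phi_ge {t : ℝ} {j : ℕ} (ht : Real.exp (j+2) ≤ t) : t * (j+1) ≤ phi t := by
  have ht0 : (0:ℝ) < t := lt_of_lt_of_le (Real.exp_pos _) ht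
  have hlog : (j+2:ℝ) ≤ Real.log t := by
    rw [← Real.log_exp (j+2:ℝ)]
    exact Real.log_le_log (Real.exp_pos _) ht
  have : t * (j+2) ≤ t * Real.log t := by nlinarith
  simp only [phi]; nlinarith




/-- Uniform integrability bound from the entropy bound. -/
lemma meas_bound {m ν : Measure X} [IsFiniteMeasure m] [IsFiniteMeasure ν] (hac : ν ≪ m)
    {c : ℝ}
    (hH : ∫⁻ x, ENNReal.ofReal (phi ((ν.rnDeriv m x).toReal)) ∂m ≤ ENNReal.ofReal c)
    {A : Set X} (hA : MeasurableSet A) (j : ℕ) :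
    ν A ≤ ENNReal.ofReal (Real.exp (j+2)) * m A + ENNReal.ofReal c / (j+1) := by
  set g := ν.rnDeriv m with hg
  have hgm : Measurable g := Measure.measurable_rnDeriv _ _
  set K : ℝ≥0∞ := ENNReal.ofReal (Real.exp (j+2)) with hK
  have hKset : MeasurableSet {x | g x ≤ K} := measurableSet_le hgm measurable_const
  have hphim : Measurable fun x => ENNReal.ofReal (phi ((g x).toReal)) :=
    (phi_continuous.measurable.comp hgm.ennreal_toReal).ennreal_ofReal
  have hcast : ENNReal.ofReal ((j:ℝ)+1) = ((j:ℕ)+1 : ℝ≥0∞) := by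
    rw [ENNReal.ofReal_add (by positivity) zero_le_one]; simp
  have hνA : ν A = ∫⁻ x in A, g x ∂m := (Measure.setLIntegral_rnDeriv hac A).symm
  have hsplit : ν A ≤ ∫⁻ x in A ∩ {x | g x ≤ K}, g x ∂m
      + ∫⁻ x in A ∩ {x | g x ≤ K}ᶜ, g x ∂m := by
    rw [hνA, ← lintegral_inter_add_diff (B := {x | g x ≤ K}) _ _ hKset]
    · gcongr
      exact fun x hx => ⟨hx.1, hx.2⟩
  have h1 : ∫⁻ x in A ∩ {x | g x ≤ K}, g x ∂m ≤ K * m A := by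
    calc ∫⁻ x in A ∩ {x | g x ≤ K}, g x ∂m
        ≤ ∫⁻ _ in A ∩ {x | g x ≤ K}, K ∂m := by
          refine setLIntegral_mono measurable_const (fun x hx => hx.2)
      _ = K * m (A ∩ {x | g x ≤ K}) := by rw [setLIntegral_const]
      _ ≤ K * m A := by gcongr; exact inter_subset_left
  have h2 : ∫⁻ x in A ∩ {x | g x ≤ K}ᶜ, g x ∂m ≤ ENNReal.ofReal c / (j+1) := by
    have hpt : ∀ᵐ x ∂m, x ∈ A ∩ {x | g x ≤ K}ᶜ →
        g x * (j+1) ≤ ENNReal.ofReal (phi ((g x).toReal)) := by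
      filter_upwards [Measure.rnDeriv_lt_top ν m] with x hfin hx
      have hgt : K < g x := not_le.1 hx.2
      have ht : Real.exp (j+2) ≤ (g x).toReal := by
        have := (ENNReal.ofReal_lt_iff_lt_toReal (Real.exp_pos _).le hfin.ne).1 hgt
        exact this.le
      have := phi_ge ht
      calc g x * (j+1) = ENNReal.ofReal ((g x).toReal * (j+1)) := by
            rw [ENNReal.ofReal_mul (ENNReal.toReal_nonneg), ENNReal.ofReal_toReal hfin.ne, hcast]
        _ ≤ ENNReal.ofReal (phi ((g x).toReal)) := ENNReal.ofReal_le_ofReal this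
    have hmeas : MeasurableSet (A ∩ {x | g x ≤ K}ᶜ) := hA.inter hKset.compl
    have : (∫⁻ x in A ∩ {x | g x ≤ K}ᶜ, g x ∂m) * (j+1)
        ≤ ENNReal.ofReal c := by
      calc (∫⁻ x in A ∩ {x | g x ≤ K}ᶜ, g x ∂m) * (j+1)
          = ∫⁻ x in A ∩ {x | g x ≤ K}ᶜ, g x * (j+1) ∂m := by
            rw [lintegral_mul_const _ hgm]
        _ ≤ ∫⁻ x in A ∩ {x | g x ≤ K}ᶜ, ENNReal.ofReal (phi ((g x).toReal)) ∂m := by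
            exact setLIntegral_mono_ae hphim.aemeasurable hpt
        _ ≤ ∫⁻ x, ENNReal.ofReal (phi ((g x).toReal)) ∂m := setLIntegral_le_lintegral _ _
        _ ≤ ENNReal.ofReal c := hH
    rw [ENNReal.le_div_iff_mul_le (by simp) (by simp)]
    exact this
  calc ν A ≤ _ := hsplit
    _ ≤ K * m A + ENNReal.ofReal c / (j+1) := add_le_add h1 h2




lemma jensen_partition {m ν : Measure X} [IsFiniteMeasure m] [IsFiniteMeasure ν] (hac : ν ≪ m)
    {c : ℝ} (hc : 0 ≤ c)
    (hH : ∫⁻ x, ENNReal.ofReal (phi ((ν.rnDeriv m x).toReal)) ∂m ≤ ENNReal.ofReal c)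
    {n : ℕ} {A : Fin n → Set X} (hAm : ∀ i, MeasurableSet (A i))
    (hAd : Pairwise (Function.onFun Disjoint A)) (hAc : (⋃ i, A i) = univ) :
    ∑ i, phi ((ν (A i)).toReal / (m (A i)).toReal) * (m (A i)).toReal ≤ c := by
  set gr : X → ℝ := fun x => (ν.rnDeriv m x).toReal with hgr
  have hgrm : Measurable gr := (Measure.measurable_rnDeriv _ _).ennreal_toReal
  have hgr0 : ∀ x, 0 ≤ gr x := fun x => ENNReal.toReal_nonneg
  have hgint : Integrable gr m := Measure.integrable_toReal_rnDeriv
  have hphim : Measurable fun x => phi (gr x) := phi_continuous.measurable.comp hgrm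
  have hHfin : ∫⁻ x, ENNReal.ofReal (phi (gr x)) ∂m < ⊤ :=
    lt_of_le_of_lt hH ENNReal.ofReal_lt_top
  have hphiint : Integrable (fun x => phi (gr x)) m := by
    refine ⟨hphim.aestronglyMeasurable, ?_⟩
    rw [hasFiniteIntegral_iff_norm]
    have heq : ∀ x, ENNReal.ofReal ‖phi (gr x)‖ = ENNReal.ofReal (phi (gr x)) := fun x => by
      rw [Real.norm_eq_abs, abs_of_nonneg (phi_nonneg (hgr0 x))]
    calc ∫⁻ x, ENNReal.ofReal ‖phi (gr x)‖ ∂m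
        = ∫⁻ x, ENNReal.ofReal (phi (gr x)) ∂m := by simp_rw [heq]
      _ < ⊤ := hHfin
  have hreal : ∫ x, phi (gr x) ∂m ≤ c := by
    rw [integral_eq_lintegral_of_nonneg_ae (Eventually.of_forall fun x => phi_nonneg (hgr0 x))
      hphim.aestronglyMeasurable]
    calc (∫⁻ x, ENNReal.ofReal (phi (gr x)) ∂m).toReal
        ≤ (ENNReal.ofReal c).toReal := ENNReal.toReal_mono ENNReal.ofReal_ne_top hH
      _ = c := ENNReal.toReal_ofReal hc
  have hpiece : ∀ i, phi ((ν (A i)).toReal / (m (A i)).toReal) * (m (A i)).toReal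
      ≤ ∫ x in A i, phi (gr x) ∂m := by
    intro i
    by_cases h0 : m (A i) = 0
    · have : m.restrict (A i) = 0 := Measure.restrict_eq_zero.2 h0
      simp [h0, this]
    · have hmfin : m (A i) ≠ ⊤ := (measure_lt_top m _).ne
      have hνi : ∫ x in A i, gr x ∂m = (ν (A i)).toReal := by
        rw [hgr]
        rw [integral_toReal ((Measure.measurable_rnDeriv _ _).aemeasurable)
          (ae_restrict_of_ae (Measure.rnDeriv_lt_top _ _)), Measure.setLIntegral_rnDeriv hac]
      have hjen : phi (⨍ x in A i, gr x ∂m) ≤ ⨍ x in A i, phi (gr x) ∂m := by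
        refine ConvexOn.map_set_average_le phi_convexOn phi_continuous.continuousOn
          isClosed_Ici h0 hmfin ?_ hgint.integrableOn hphiint.integrableOn
        exact Eventually.of_forall fun x => hgr0 x
      have havg : ⨍ x in A i, gr x ∂m = (ν (A i)).toReal / (m (A i)).toReal := by
        rw [setAverage_eq, hνi, smul_eq_mul, div_eq_inv_mul, measureReal_def]
      have hmpos : (0:ℝ) < (m (A i)).toReal :=
        ENNReal.toReal_pos h0 hmfin
      rw [havg] at hjen
      have := mul_le_mul_of_nonneg_right hjen hmpos.le
      calc phi ((ν (A i)).toReal / (m (A i)).toReal) * (m (A i)).toReal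
          ≤ (⨍ x in A i, phi (gr x) ∂m) * (m (A i)).toReal := this
        _ = ∫ x in A i, phi (gr x) ∂m := by
            rw [setAverage_eq, smul_eq_mul, measureReal_def]
            field_simp
  calc ∑ i, phi ((ν (A i)).toReal / (m (A i)).toReal) * (m (A i)).toReal
      ≤ ∑ i, ∫ x in A i, phi (gr x) ∂m := Finset.sum_le_sum fun i _ => hpiece i
    _ = ∫ x in ⋃ i, A i, phi (gr x) ∂m := by
        rw [integral_iUnion hAm hAd (hAc ▸ hphiint.integrableOn), tsum_fintype]
    _ = ∫ x, phi (gr x) ∂m := by rw [hAc, Measure.restrict_univ]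
    _ ≤ c := hreal



lemma L_tendsto_sum {m : Measure X} [IsFiniteMeasure m]
    (L : Set X → ℝ) (hnn : ∀ A, 0 ≤ L A)
    (hadd : ∀ A B, MeasurableSet A → MeasurableSet B → Disjoint A B → L (A ∪ B) = L A + L B)
    (hsmall : ∀ ε, 0 < ε → ∃ δ, 0 < δ ∧ ∀ A, MeasurableSet A → (m A).toReal < δ → L A ≤ ε)
    (f : ℕ → Set X) (hf : ∀ i, MeasurableSet (f i))
    (hd : Pairwise (Function.onFun Disjoint f)) :
    Tendsto (fun n => ∑ i ∈ Finset.range n, L (f i)) atTop (𝓝 (L (⋃ i, f i))) := by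
  set R : ℕ → Set X := fun n => ⋃ i ∈ {i : ℕ | n ≤ i}, f i with hR
  set B : ℕ → Set X := fun n => ⋃ i ∈ Finset.range n, f i with hB
  have hRm : ∀ n, MeasurableSet (R n) := fun n =>
    MeasurableSet.biUnion (to_countable _) fun i _ => hf i
  have hBm : ∀ n, MeasurableSet (B n) := fun n =>
    MeasurableSet.biUnion (Finset.range n).countable_toSet fun i _ => hf i
  have hsplit : ∀ n, (⋃ i, f i) = B n ∪ R n := by
    intro n
    ext x
    simp only [mem_iUnion, mem_union, hB, hR, Finset.mem_coe, Finset.mem_range, mem_setOf_eq,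
      exists_prop]
    constructor
    · rintro ⟨i, hi⟩
      rcases lt_or_ge i n with h | h
      · exact Or.inl ⟨i, h, hi⟩
      · exact Or.inr ⟨i, h, hi⟩
    · rintro (⟨i, _, hi⟩ | ⟨i, _, hi⟩) <;> exact ⟨i, hi⟩
  have hdisj : ∀ n, Disjoint (B n) (R n) := by
    intro n
    rw [Set.disjoint_left]
    rintro x hx hx'
    simp only [hB, hR, mem_iUnion, Finset.mem_coe, Finset.mem_range, mem_setOf_eq,
      exists_prop] at hx hx'
    obtain ⟨i, hi, hxi⟩ := hx
    obtain ⟨j, hj, hxj⟩ := hx'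
    have hij : i ≠ j := by omega
    exact Set.disjoint_left.1 (hd hij) hxi hxj
  have hLB : ∀ n, L (B n) = ∑ i ∈ Finset.range n, L (f i) := by
    intro n
    induction n with
    | zero =>
      have hB0 : B 0 = ∅ := by simp [hB]
      have h0 := hadd ∅ ∅ MeasurableSet.empty MeasurableSet.empty (by simp)
      simp only [Set.union_empty] at h0
      have hL0 : L ∅ = 0 := by linarith
      simp [hB0, hL0]
    | succ n ih =>
        have hBn : B (n+1) = B n ∪ f n := by
          simp only [hB]; rw [Finset.range_add_one]
          ext x; simp only [mem_iUnion, Finset.mem_coe, Finset.mem_insert, Finset.mem_range,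
            mem_union, exists_prop]
          constructor
          · rintro ⟨i, (rfl | hi), hx⟩
            · exact Or.inr hx
            · exact Or.inl ⟨i, hi, hx⟩
          · rintro (⟨i, hi, hx⟩ | hx)
            · exact ⟨i, Or.inr hi, hx⟩
            · exact ⟨n, Or.inl rfl, hx⟩
        have hdisj' : Disjoint (B n) (f n) := by
          rw [Set.disjoint_left]
          rintro x hx hx'
          simp only [hB, mem_iUnion, Finset.mem_coe, Finset.mem_range, exists_prop] at hx
          obtain ⟨i, hi, hxi⟩ := hx
          exact Set.disjoint_left.1 (hd (by omega : i ≠ n)) hxi hx'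
        rw [hBn, hadd _ _ (hBm n) (hf n) hdisj', ih, Finset.sum_range_succ]
  have hmR : Tendsto (fun n => m (R n)) atTop (𝓝 0) := by
    have hiInter : (⋂ n, R n) = ∅ := by
      ext x
      simp only [mem_iInter, mem_empty_iff_false, iff_false, hR, mem_iUnion, mem_setOf_eq,
        exists_prop, not_forall]
      by_contra h
      push_neg at h
      obtain ⟨i, hi, hxi⟩ := h 0
      obtain ⟨j, hj, hxj⟩ := h (i+1)
      exact Set.disjoint_left.1 (hd (by omega : i ≠ j)) hxi hxj
    have hanti : Antitone R := by
      intro a b hab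
      apply Set.iUnion₂_subset
      intro i hi
      exact Set.subset_iUnion₂ (s := fun i _ => f i) i (le_trans hab hi)
    have := tendsto_measure_iInter_atTop (μ := m)
      (fun n => (hRm n).nullMeasurableSet) hanti ⟨0, (measure_lt_top m _).ne⟩
    rwa [hiInter, measure_empty] at this
  have hLR : Tendsto (fun n => L (R n)) atTop (𝓝 0) := by
    rw [Metric.tendsto_atTop]
    intro ε hε
    obtain ⟨δ, hδ, hδ'⟩ := hsmall (ε/2) (by linarith)
    have hev : ∀ᶠ n in atTop, m (R n) < ENNReal.ofReal δ := by
      refine hmR.eventually_lt_const ?_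
      simpa using ENNReal.ofReal_pos.2 hδ
    obtain ⟨N, hN⟩ := hev.exists_forall_of_atTop
    refine ⟨N, fun n hn => ?_⟩
    have h1 : (m (R n)).toReal < δ := ENNReal.toReal_lt_of_lt_ofReal (hN n hn)
    have h2 : L (R n) ≤ ε/2 := hδ' _ (hRm n) h1
    have h3 : 0 ≤ L (R n) := hnn _
    rw [Real.dist_eq, sub_zero, abs_of_nonneg h3]
    linarith
  have hkey : ∀ n, L (⋃ i, f i) = ∑ i ∈ Finset.range n, L (f i) + L (R n) := by
    intro n
    rw [← hLB]
    rw [hsplit n]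
    exact hadd _ _ (hBm n) (hRm n) (hdisj n)
  have : Tendsto (fun n => L (⋃ i, f i) - L (R n)) atTop (𝓝 (L (⋃ i, f i) - 0)) :=
    tendsto_const_nhds.sub hLR
  rw [sub_zero] at this
  refine this.congr fun n => ?_
  rw [hkey n]; ring




lemma entropy_bound_of_partition {m : Measure X} [IsFiniteMeasure m] {μ0 : Measure X}
    [IsFiniteMeasure μ0] (hac : μ0 ≪ m) {c : ℝ} (hc : 0 ≤ c)
    (hpart : ∀ (n : ℕ) (A : Fin n → Set X), (∀ i, MeasurableSet (A i)) →
      Pairwise (Function.onFun Disjoint A) → (⋃ i, A i) = univ →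
      ∑ i, phi ((μ0 (A i)).toReal / (m (A i)).toReal) * (m (A i)).toReal ≤ c) :
    ∫⁻ x, ENNReal.ofReal (phi ((μ0.rnDeriv m x).toReal)) ∂m ≤ ENNReal.ofReal c := by
  set u : ℝ := (m univ).toReal with hu
  have hu0 : 0 ≤ u := ENNReal.toReal_nonneg
  set g : X → ℝ≥0∞ := μ0.rnDeriv m with hgdef
  have hgm : Measurable g := Measure.measurable_rnDeriv _ _
  set gr : X → ℝ := fun x => (g x).toReal with hgrdef
  have hgrm : Measurable gr := hgm.ennreal_toReal
  have hphim : Measurable fun x => ENNReal.ofReal (phi (gr x)) :=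
    (phi_continuous.measurable.comp hgrm).ennreal_ofReal
  set ρ : Measure X := m.withDensity (fun x => ENNReal.ofReal (phi (gr x))) with hρ
  have hρap : ∀ B : Set X, MeasurableSet B → ρ B = ∫⁻ x in B, ENNReal.ofReal (phi (gr x)) ∂m :=
    fun B hB => withDensity_apply _ hB
  -- main step: for every ε > 0 and every N : ℕ, ρ {g < N} ≤ ofReal (c + ε * u)
  have key : ∀ ε : ℝ, 0 < ε → ∀ N : ℕ,
      ρ {x | g x < (N : ℝ≥0∞)} ≤ ENNReal.ofReal (c + ε * u) := by
    intro ε hε N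
    -- uniform continuity of phi on Icc 0 (N+1)
    have hUC : UniformContinuousOn phi (Icc 0 ((N:ℝ)+1)) :=
      (isCompact_Icc).uniformContinuousOn_of_continuous phi_continuous.continuousOn
    rw [Metric.uniformContinuousOn_iff] at hUC
    obtain ⟨δ₀, hδ₀, hδ₀'⟩ := hUC ε hε
    set δ : ℝ := min (δ₀/2) 1 with hδdef
    have hδpos : 0 < δ := lt_min (by linarith) one_pos
    have hδ1 : δ ≤ 1 := min_le_right _ _
    have hδlt : δ < δ₀ := lt_of_le_of_lt (min_le_left _ _) (by linarith)
    set n : ℕ := ⌈(N:ℝ)/δ⌉₊ with hn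
    have hnδ : (N:ℝ) ≤ n * δ := by
      rw [← div_le_iff₀ hδpos]
      exact Nat.le_ceil _
    have hnδ' : (n:ℝ) * δ ≤ N + δ := by
      have := Nat.ceil_lt_add_one (by positivity : (0:ℝ) ≤ (N:ℝ)/δ)
      have h2 : (n:ℝ) ≤ (N:ℝ)/δ + 1 := this.le
      calc (n:ℝ) * δ ≤ ((N:ℝ)/δ + 1) * δ := by nlinarith
        _ = N + δ := by field_simp
    -- the partition
    set A : Fin (n+1) → Set X := fun k =>
      {x | ENNReal.ofReal (k*δ) ≤ g x ∧ ((k:ℕ) = n ∨ g x < ENNReal.ofReal ((k+1)*δ))} with hA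
    have hAm : ∀ k, MeasurableSet (A k) := by
      intro k
      have heq : A k = {x | ENNReal.ofReal (k*δ) ≤ g x} ∩
          {x | (k:ℕ) = n ∨ g x < ENNReal.ofReal ((k+1)*δ)} := rfl
      rw [heq]
      refine (hgm measurableSet_Ici).inter ?_
      rcases eq_or_ne (k:ℕ) n with h | h
      · have h2 : {x : X | (k:ℕ) = n ∨ g x < ENNReal.ofReal ((k+1)*δ)} = univ := by
          ext x; simp [h]
        rw [h2]; exact MeasurableSet.univ
      · have h2 : {x : X | (k:ℕ) = n ∨ g x < ENNReal.ofReal ((k+1)*δ)}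
            = {x | g x < ENNReal.ofReal ((k+1)*δ)} := by ext x; simp [h]
        rw [h2]; exact hgm measurableSet_Iio
    have hmemA : ∀ (x : X) (k : Fin (n+1)), x ∈ A k ↔
        (ENNReal.ofReal (k*δ) ≤ g x ∧ ((k:ℕ) = n ∨ g x < ENNReal.ofReal ((k+1)*δ))) :=
      fun x k => Iff.rfl
    -- disjointness
    have hAd : Pairwise (Function.onFun Disjoint A) := by
      have haux : ∀ i j : Fin (n+1), (i:ℕ) < (j:ℕ) → Disjoint (A i) (A j) := by
        intro i j hij
        rw [Set.disjoint_left]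
        rintro x ⟨hi1, hi2⟩ ⟨hj1, hj2⟩
        have hin : (i:ℕ) ≠ n := by omega
        rcases hi2 with h | h
        · exact hin h
        · have h1 : ENNReal.ofReal (((i:ℕ)+1)*δ) ≤ ENNReal.ofReal ((j:ℕ)*δ) := by
            apply ENNReal.ofReal_le_ofReal
            have : ((i:ℕ):ℝ)+1 ≤ ((j:ℕ):ℝ) := by exact_mod_cast hij
            nlinarith
          exact absurd (lt_of_lt_of_le (lt_of_lt_of_le h (h1.trans hj1)) le_rfl) (lt_irrefl _)
      intro i j hij
      rcases lt_or_gt_of_ne (fun h => hij (Fin.ext (by exact_mod_cast congrArg Fin.val h))) with h | h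
      · exact haux i j h
      · exact (haux j i h).symm
    -- covering
    have hAc : (⋃ k, A k) = univ := by
      ext x
      simp only [mem_iUnion, mem_univ, iff_true]
      by_cases hbig : ENNReal.ofReal (n*δ) ≤ g x
      · refine ⟨⟨n, Nat.lt_succ_self n⟩, ?_, ?_⟩
        · simpa using hbig
        · left; rfl
      · push_neg at hbig
        have hfin : g x < ⊤ := lt_of_lt_of_le hbig le_top
        set t : ℝ := (g x).toReal with ht
        have ht0 : 0 ≤ t := ENNReal.toReal_nonneg
        have htlt : t < n*δ := by
          have := (ENNReal.lt_ofReal_iff_toReal_lt hfin.ne).1 hbig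
          exact this
        set k : ℕ := ⌊t/δ⌋₊ with hk
        have hkn : k < n := by
          apply Nat.floor_lt (by positivity) |>.2
          rw [div_lt_iff₀ hδpos]
          calc t < n*δ := htlt
            _ = n*δ := rfl
        have hklow : (k:ℝ)*δ ≤ t := by
          have := Nat.floor_le (by positivity : (0:ℝ) ≤ t/δ)
          calc (k:ℝ)*δ ≤ (t/δ)*δ := by nlinarith
            _ = t := by field_simp
        have hkhigh : t < ((k:ℝ)+1)*δ := by
          have := Nat.lt_floor_add_one (t/δ)
          calc t = (t/δ)*δ := by field_simp
            _ < ((k:ℝ)+1)*δ := by nlinarith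
        refine ⟨⟨k, by omega⟩, ?_, Or.inr ?_⟩
        · show ENNReal.ofReal (((⟨k, by omega⟩ : Fin (n+1)):ℕ)*δ) ≤ g x
          have : g x = ENNReal.ofReal t := (ENNReal.ofReal_toReal hfin.ne).symm
          rw [this]
          exact ENNReal.ofReal_le_ofReal (by exact_mod_cast hklow)
        · show g x < ENNReal.ofReal ((((⟨k, by omega⟩ : Fin (n+1)):ℕ)+1)*δ)
          have : g x = ENNReal.ofReal t := (ENNReal.ofReal_toReal hfin.ne).symm
          rw [this]
          apply (ENNReal.ofReal_lt_ofReal_iff (by positivity)).2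
          exact_mod_cast hkhigh
    -- per-piece bound and summation
    set sF : Finset (Fin (n+1)) := Finset.univ.filter (fun k => (k:ℕ) < n) with hsF
    have hμ0A : ∀ k, μ0 (A k) = ∫⁻ x in A k, g x ∂m :=
      fun k => (Measure.setLIntegral_rnDeriv hac _).symm
    have hpiece : ∀ k ∈ sF, ρ (A k)
        ≤ ENNReal.ofReal ((phi ((μ0 (A k)).toReal / (m (A k)).toReal) + ε) * (m (A k)).toReal) := by
      intro k hk
      have hkn : (k:ℕ) < n := by simpa [hsF] using hk
      by_cases h0 : m (A k) = 0
      · have : ρ (A k) = 0 := (withDensity_absolutelyContinuous m _) h0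
        rw [this]; exact bot_le
      · have hmfin : m (A k) ≠ ⊤ := (measure_lt_top m _).ne
        set mk : ℝ := (m (A k)).toReal with hmk
        have hmkpos : 0 < mk := ENNReal.toReal_pos h0 hmfin
        set avg : ℝ := (μ0 (A k)).toReal / mk with havg
        have hμfin : μ0 (A k) ≠ ⊤ := (measure_lt_top μ0 _).ne
        have hup : μ0 (A k) ≤ ENNReal.ofReal (((k:ℕ)+1)*δ) * m (A k) := by
          rw [hμ0A k]
          calc ∫⁻ x in A k, g x ∂m
              ≤ ∫⁻ _ in A k, ENNReal.ofReal (((k:ℕ)+1)*δ) ∂m := by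
                refine setLIntegral_mono measurable_const (fun x hx => ?_)
                rcases hx.2 with h | h
                · omega
                · exact h.le
            _ = ENNReal.ofReal (((k:ℕ)+1)*δ) * m (A k) := setLIntegral_const _ _
        have hlow : ENNReal.ofReal ((k:ℕ)*δ) * m (A k) ≤ μ0 (A k) := by
          rw [hμ0A k]
          calc ENNReal.ofReal ((k:ℕ)*δ) * m (A k)
              = ∫⁻ _ in A k, ENNReal.ofReal ((k:ℕ)*δ) ∂m := (setLIntegral_const _ _).symm
            _ ≤ ∫⁻ x in A k, g x ∂m :=
                setLIntegral_mono hgm (fun x hx => hx.1)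
        have havg_up : avg ≤ ((k:ℕ)+1)*δ := by
          rw [havg, div_le_iff₀ hmkpos]
          have h1 : (μ0 (A k)).toReal ≤ (ENNReal.ofReal (((k:ℕ)+1)*δ) * m (A k)).toReal :=
            ENNReal.toReal_mono (by finiteness) hup
          rwa [ENNReal.toReal_mul, ENNReal.toReal_ofReal (by positivity)] at h1
        have havg_low : ((k:ℕ):ℝ)*δ ≤ avg := by
          rw [havg, le_div_iff₀ hmkpos]
          have h1 : (ENNReal.ofReal ((k:ℕ)*δ) * m (A k)).toReal ≤ (μ0 (A k)).toReal :=
            ENNReal.toReal_mono hμfin hlow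
          rwa [ENNReal.toReal_mul, ENNReal.toReal_ofReal (by positivity)] at h1
        have havg0 : 0 ≤ avg := le_trans (by positivity) havg_low
        have hub : ((k:ℕ)+1)*δ ≤ (N:ℝ) + 1 := by
          have h1 : ((k:ℕ):ℝ)+1 ≤ (n:ℝ) := by exact_mod_cast hkn
          nlinarith
        have hpt : ∀ x ∈ A k, phi (gr x) ≤ phi avg + ε := by
          intro x hx
          have hk_ne : (k:ℕ) ≠ n := by omega
          have hxu : g x < ENNReal.ofReal (((k:ℕ)+1)*δ) := by
            rcases hx.2 with h | h
            · omega
            · exact h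
          have hgfin : g x ≠ ⊤ := (lt_of_lt_of_le hxu le_top).ne
          have hgru : gr x < ((k:ℕ)+1)*δ :=
            (ENNReal.lt_ofReal_iff_toReal_lt hgfin).1 hxu
          have hgrl : ((k:ℕ):ℝ)*δ ≤ gr x := by
            have := hx.1
            exact (ENNReal.ofReal_le_iff_le_toReal hgfin).1 this
          have hgr_mem : gr x ∈ Icc 0 ((N:ℝ)+1) :=
            ⟨ENNReal.toReal_nonneg, le_trans hgru.le hub⟩
          have havg_mem : avg ∈ Icc 0 ((N:ℝ)+1) := ⟨havg0, le_trans havg_up hub⟩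
          have hdist : dist (gr x) avg < δ₀ := by
            rw [Real.dist_eq, abs_sub_lt_iff]
            constructor <;> nlinarith
          have := hδ₀' _ hgr_mem _ havg_mem hdist
          rw [Real.dist_eq, abs_sub_lt_iff] at this
          linarith [this.1]
        have hρk : ρ (A k) = ∫⁻ x in A k, ENNReal.ofReal (phi (gr x)) ∂m := hρap _ (hAm k)
        rw [hρk]
        calc ∫⁻ x in A k, ENNReal.ofReal (phi (gr x)) ∂m
            ≤ ∫⁻ _ in A k, ENNReal.ofReal (phi avg + ε) ∂m := by
              refine setLIntegral_mono measurable_const (fun x hx => ?_)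
              exact ENNReal.ofReal_le_ofReal (hpt x hx)
          _ = ENNReal.ofReal (phi avg + ε) * m (A k) := setLIntegral_const _ _
          _ = ENNReal.ofReal ((phi avg + ε) * mk) := by
              have hphie : (0:ℝ) ≤ phi avg + ε := by
                have := phi_nonneg havg0; linarith
              rw [ENNReal.ofReal_mul hphie, ENNReal.ofReal_toReal hmfin]
    -- the union of the bounded pieces
    have hB : (⋃ k ∈ sF, A k) = {x | g x < ENNReal.ofReal (n*δ)} := by
      ext x
      simp only [mem_iUnion, mem_setOf_eq, exists_prop]
      constructor
      · rintro ⟨k, hk, hx⟩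
        have hkn : (k:ℕ) < n := by simpa [hsF] using hk
        have hk_ne : (k:ℕ) ≠ n := by omega
        rcases hx.2 with h | h
        · omega
        · refine lt_of_lt_of_le h (ENNReal.ofReal_le_ofReal ?_)
          have h1 : ((k:ℕ):ℝ)+1 ≤ (n:ℝ) := by exact_mod_cast hkn
          nlinarith
      · intro hx
        have hcov := hAc
        have hxmem : x ∈ ⋃ k, A k := by rw [hcov]; exact mem_univ x
        obtain ⟨k, hk⟩ := mem_iUnion.1 hxmem
        rcases eq_or_ne (k:ℕ) n with h | h
        · exfalso
          have h1 : ENNReal.ofReal ((k:ℕ)*δ) ≤ g x := hk.1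
          rw [h] at h1
          exact absurd (lt_of_le_of_lt h1 hx) (lt_irrefl _)
        · have hkn : (k:ℕ) < n := by omega
          exact ⟨k, by simp [hsF, hkn], hk⟩
    have hρB : ρ {x | g x < ENNReal.ofReal (n*δ)} = ∑ k ∈ sF, ρ (A k) := by
      rw [← hB]
      exact measure_biUnion_finset (hAd.set_pairwise _) (fun k _ => hAm k)
    have hsub : {x | g x < (N:ℝ≥0∞)} ⊆ {x | g x < ENNReal.ofReal (n*δ)} := by
      intro x hx
      simp only [mem_setOf_eq] at hx ⊢
      refine lt_of_lt_of_le hx ?_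
      rw [← ENNReal.ofReal_natCast]
      exact ENNReal.ofReal_le_ofReal hnδ
    -- sum bound
    have hsum_m : ∑ k ∈ sF, (m (A k)).toReal ≤ u := by
      have h1 : ∑ k ∈ sF, m (A k) = m (⋃ k ∈ sF, A k) :=
        (measure_biUnion_finset (hAd.set_pairwise _) (fun k _ => hAm k)).symm
      have h2 : (∑ k ∈ sF, m (A k)).toReal = ∑ k ∈ sF, (m (A k)).toReal :=
        ENNReal.toReal_sum (fun k _ => (measure_lt_top m _).ne)
      rw [← h2, h1]
      exact ENNReal.toReal_mono (measure_lt_top m _).ne (measure_mono (subset_univ _))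
    have hsum_phi : ∑ k ∈ sF, phi ((μ0 (A k)).toReal / (m (A k)).toReal) * (m (A k)).toReal
        ≤ c := by
      refine le_trans (Finset.sum_le_sum_of_subset_of_nonneg (Finset.subset_univ sF) ?_) ?_
      · intro k _ _
        have havg0 : 0 ≤ (μ0 (A k)).toReal / (m (A k)).toReal := by positivity
        exact mul_nonneg (phi_nonneg havg0) ENNReal.toReal_nonneg
      · exact hpart (n+1) A hAm hAd hAc
    calc ρ {x | g x < (N:ℝ≥0∞)}
        ≤ ρ {x | g x < ENNReal.ofReal (n*δ)} := measure_mono hsub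
      _ = ∑ k ∈ sF, ρ (A k) := hρB
      _ ≤ ∑ k ∈ sF, ENNReal.ofReal
            ((phi ((μ0 (A k)).toReal / (m (A k)).toReal) + ε) * (m (A k)).toReal) :=
          Finset.sum_le_sum hpiece
      _ = ENNReal.ofReal (∑ k ∈ sF,
            (phi ((μ0 (A k)).toReal / (m (A k)).toReal) + ε) * (m (A k)).toReal) := by
          rw [ENNReal.ofReal_sum_of_nonneg]
          intro k _
          have havg0 : 0 ≤ (μ0 (A k)).toReal / (m (A k)).toReal := by positivity
          have := phi_nonneg havg0
          positivity
      _ ≤ ENNReal.ofReal (c + ε * u) := by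
          apply ENNReal.ofReal_le_ofReal
          have hexp : ∑ k ∈ sF,
              (phi ((μ0 (A k)).toReal / (m (A k)).toReal) + ε) * (m (A k)).toReal
              = (∑ k ∈ sF, phi ((μ0 (A k)).toReal / (m (A k)).toReal) * (m (A k)).toReal)
                + ε * ∑ k ∈ sF, (m (A k)).toReal := by
            rw [Finset.mul_sum, ← Finset.sum_add_distrib]
            congr 1; funext k; ring
          rw [hexp]
          have : ε * ∑ k ∈ sF, (m (A k)).toReal ≤ ε * u :=
            mul_le_mul_of_nonneg_left hsum_m hε.le
          linarith
  -- conclude: let N → ∞, then ε → 0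
  have hint : ∫⁻ x, ENNReal.ofReal (phi (gr x)) ∂m = ρ univ := by
    rw [hρ, withDensity_apply _ MeasurableSet.univ, Measure.restrict_univ]
  have hρuniv : ρ univ = ρ {x | g x < ⊤} := by
    have hae : m {x | ¬ g x < ⊤} = 0 := by
      have := Measure.rnDeriv_lt_top μ0 m
      rwa [ae_iff] at this
    have hc0 : ρ {x | g x < ⊤}ᶜ = 0 := by
      refine (withDensity_absolutelyContinuous m _) ?_
      have : {x | g x < ⊤}ᶜ = {x | ¬ g x < ⊤} := rfl
      rw [this]; exact hae
    have h1 : ρ univ ≤ ρ {x | g x < ⊤} := by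
      calc ρ univ = ρ ({x | g x < ⊤} ∪ {x | g x < ⊤}ᶜ) := by rw [union_compl_self]
        _ ≤ ρ {x | g x < ⊤} + ρ {x | g x < ⊤}ᶜ := measure_union_le _ _
        _ = ρ {x | g x < ⊤} := by rw [hc0, add_zero]
    exact le_antisymm h1 (measure_mono (subset_univ _))
  have hlim : ∀ ε : ℝ, 0 < ε → ρ {x | g x < ⊤} ≤ ENNReal.ofReal (c + ε * u) := by
    intro ε hε
    have hmono : Monotone (fun N : ℕ => {x | g x < (N:ℝ≥0∞)}) := by
      intro a b hab x hx
      simp only [mem_setOf_eq] at hx ⊢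
      exact lt_of_lt_of_le hx (by exact_mod_cast Nat.cast_le.2 hab)
    have hUnion : (⋃ N : ℕ, {x | g x < (N:ℝ≥0∞)}) = {x | g x < ⊤} := by
      ext x
      simp only [mem_iUnion, mem_setOf_eq]
      constructor
      · rintro ⟨N, hN⟩; exact lt_of_lt_of_le hN le_top
      · intro hx
        obtain ⟨N, hN⟩ := ENNReal.exists_nat_gt hx.ne
        exact ⟨N, hN⟩
    have htend := tendsto_measure_iUnion_atTop (μ := ρ) hmono
    rw [hUnion] at htend
    exact le_of_tendsto' htend (fun N => key ε hε N)
  rw [hint, hρuniv]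
  by_cases hu' : u = 0
  · have := hlim 1 one_pos
    rwa [hu', mul_zero, add_zero] at this
  · have hupos : 0 < u := lt_of_le_of_ne hu0 (Ne.symm hu')
    refine ENNReal.le_of_forall_pos_le_add (fun ε' hε' _ => ?_)
    have hεpos : 0 < (ε' : ℝ) / u := by positivity
    calc ρ {x | g x < ⊤} ≤ ENNReal.ofReal (c + ((ε':ℝ)/u) * u) := hlim _ hεpos
      _ ≤ ENNReal.ofReal c + ENNReal.ofReal (((ε':ℝ)/u) * u) := ENNReal.ofReal_add_le
      _ ≤ ENNReal.ofReal c + ε' := by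
          gcongr
          have : ((ε':ℝ)/u) * u = (ε':ℝ) := by field_simp
          rw [this, ENNReal.ofReal_coe_nnreal]




/-- If the masses are uniformly bounded and the measures of every measurable set converge,
then integrals of bounded continuous functions converge. -/
lemma tendsto_integral_of_setwise [TopologicalSpace X] [OpensMeasurableSpace X]
    {F : Ultrafilter (FiniteMeasure X)} {μ0 : Measure X} [IsFiniteMeasure μ0]
    {M : ℝ} (hM : 0 ≤ M)
    (hmass : ∀ᶠ ν : FiniteMeasure X in ↑F, ((ν : Measure X) univ).toReal ≤ M)
    (hLtend : ∀ A : Set X, MeasurableSet A →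
       Tendsto (fun ν : FiniteMeasure X => ((ν : Measure X) A).toReal) ↑F (𝓝 ((μ0 A).toReal)))
    (f : X →ᵇ ℝ) :
    Tendsto (fun ν : FiniteMeasure X => ∫ x, f x ∂(ν : Measure X)) ↑F (𝓝 (∫ x, f x ∂μ0)) := by
  rw [Metric.tendsto_nhds]
  intro ε hε
  set M0 : ℝ := (μ0 univ).toReal with hM0
  have hM00 : 0 ≤ M0 := ENNReal.toReal_nonneg
  set η : ℝ := ε / (M + M0 + 2) with hη
  have hηpos : 0 < η := by positivity
  set B : ℝ := ‖f‖ with hB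
  have hB0 : 0 ≤ B := norm_nonneg f
  set K : ℕ := ⌈2*B/η⌉₊ + 1 with hK
  set cst : Fin K → ℝ := fun k => -B + k*η with hcst
  set E : Fin K → Set X := fun k => (fun x => f x) ⁻¹' (Ico (cst k) (cst k + η)) with hE
  have hEm : ∀ k, MeasurableSet (E k) :=
    fun k => (map_continuous f).measurable measurableSet_Ico
  have hEd : Pairwise (Function.onFun Disjoint E) := by
    have haux : ∀ i j : Fin K, (i:ℕ) < (j:ℕ) → Disjoint (E i) (E j) := by
      intro i j hij
      rw [Set.disjoint_left]
      rintro x ⟨hi1, hi2⟩ ⟨hj1, _⟩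
      have h1 : ((i:ℕ):ℝ) + 1 ≤ ((j:ℕ):ℝ) := by exact_mod_cast hij
      simp only [hcst] at hi2 hj1
      nlinarith
    intro i j hij
    rcases lt_or_gt_of_ne (fun h => hij (Fin.ext (by exact_mod_cast congrArg Fin.val h))) with h | h
    · exact haux i j h
    · exact (haux j i h).symm
  have hEc : (⋃ k, E k) = univ := by
    ext x
    simp only [mem_iUnion, mem_univ, iff_true]
    have hfx : |f x| ≤ B := by
      rw [← Real.norm_eq_abs]; exact f.norm_coe_le_norm x
    rw [abs_le] at hfx
    set k : ℕ := ⌊(f x + B)/η⌋₊ with hk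
    have harg0 : 0 ≤ (f x + B)/η := by
      apply div_nonneg _ hηpos.le; linarith [hfx.1]
    have hkK : k < K := by
      have hle : (f x + B)/η ≤ 2*B/η := by
        gcongr
        linarith [hfx.2]
      have h1 : k ≤ ⌊2*B/η⌋₊ := Nat.floor_le_floor hle
      have h2 : ⌊2*B/η⌋₊ ≤ ⌈2*B/η⌉₊ := Nat.floor_le_ceil _
      omega
    refine ⟨⟨k, hkK⟩, ?_, ?_⟩
    · show cst ⟨k, hkK⟩ ≤ f x
      have := Nat.floor_le harg0
      simp only [hcst]
      have h2 : (k:ℝ) * η ≤ f x + B := by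
        calc (k:ℝ) * η ≤ ((f x + B)/η) * η := by nlinarith
          _ = f x + B := by field_simp
      linarith
    · show f x < cst ⟨k, hkK⟩ + η
      have := Nat.lt_floor_add_one ((f x + B)/η)
      simp only [hcst]
      have h2 : f x + B < ((k:ℝ)+1) * η := by
        calc f x + B = ((f x + B)/η) * η := by field_simp
          _ < ((k:ℝ)+1) * η := by nlinarith
      linarith
  have happrox : ∀ (ρ : Measure X), IsFiniteMeasure ρ →
      |(∫ x, f x ∂ρ) - ∑ k, cst k * (ρ (E k)).toReal| ≤ η * (ρ univ).toReal := by
    intro ρ hρ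
    have hfint : Integrable f ρ := f.integrable ρ
    have hsplit : ∫ x, f x ∂ρ = ∑ k, ∫ x in E k, f x ∂ρ := by
      have h1 : ∫ x, f x ∂ρ = ∫ x in ⋃ k, E k, f x ∂ρ := by
        rw [hEc, Measure.restrict_univ]
      rw [h1, integral_iUnion hEm hEd (hEc ▸ hfint.integrableOn), tsum_fintype]
    have hk1 : ∀ k, cst k * (ρ (E k)).toReal ≤ ∫ x in E k, f x ∂ρ := by
      intro k
      have h := setIntegral_mono_on (integrable_const (cst k)).integrableOn
        hfint.integrableOn (hEm k) (fun x hx => hx.1)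
      rwa [setIntegral_const, smul_eq_mul, mul_comm] at h
    have hk2 : ∀ k, ∫ x in E k, f x ∂ρ ≤ (cst k + η) * (ρ (E k)).toReal := by
      intro k
      have h := setIntegral_mono_on hfint.integrableOn
        (integrable_const (cst k + η)).integrableOn (hEm k) (fun x hx => hx.2.le)
      rwa [setIntegral_const, smul_eq_mul, mul_comm] at h
    have hsum_meas : ∑ k, (ρ (E k)).toReal = (ρ univ).toReal := by
      have h1 : ∑ k ∈ Finset.univ, ρ (E k) = ρ (⋃ k ∈ Finset.univ, E k) :=
        (measure_biUnion_finset (hEd.set_pairwise _) (fun k _ => hEm k)).symm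
      have h2 : (⋃ k ∈ (Finset.univ : Finset (Fin K)), E k) = univ := by
        rw [← hEc]; simp
      rw [← ENNReal.toReal_sum (fun k _ => (measure_lt_top ρ _).ne), h1, h2]
    rw [hsplit, ← Finset.sum_sub_distrib]
    calc |∑ k, ((∫ x in E k, f x ∂ρ) - cst k * (ρ (E k)).toReal)|
        ≤ ∑ k, |(∫ x in E k, f x ∂ρ) - cst k * (ρ (E k)).toReal| :=
          Finset.abs_sum_le_sum_abs _ _
      _ ≤ ∑ k, η * (ρ (E k)).toReal := by
          refine Finset.sum_le_sum (fun k _ => ?_)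
          rw [abs_le]
          constructor
          · have := hk1 k; have h0 : (0:ℝ) ≤ (ρ (E k)).toReal := ENNReal.toReal_nonneg
            nlinarith
          · have := hk2 k; nlinarith
      _ = η * (ρ univ).toReal := by rw [← Finset.mul_sum, hsum_meas]
  have hsν : Tendsto (fun ν : FiniteMeasure X => ∑ k, cst k * ((ν : Measure X) (E k)).toReal) ↑F
      (𝓝 (∑ k, cst k * (μ0 (E k)).toReal)) :=
    tendsto_finset_sum _ (fun k _ => ((hLtend (E k) (hEm k)).const_mul (cst k)))
  have hsmall : ∀ᶠ ν : FiniteMeasure X in ↑F,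
      |(∑ k, cst k * ((ν : Measure X) (E k)).toReal) - ∑ k, cst k * (μ0 (E k)).toReal| < η := by
    rw [Metric.tendsto_nhds] at hsν
    exact (hsν η hηpos).mono (fun ν h => by rwa [Real.dist_eq] at h)
  filter_upwards [hsmall, hmass] with ν h1 h2
  have ha := happrox (ν : Measure X) inferInstance
  have hb := happrox μ0 inferInstance
  rw [Real.dist_eq]
  have htri : |(∫ x, f x ∂(ν : Measure X)) - ∫ x, f x ∂μ0|
      ≤ |(∫ x, f x ∂(ν : Measure X)) - ∑ k, cst k * ((ν : Measure X) (E k)).toReal|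
        + |(∑ k, cst k * ((ν : Measure X) (E k)).toReal) - ∑ k, cst k * (μ0 (E k)).toReal|
        + |(∑ k, cst k * (μ0 (E k)).toReal) - ∫ x, f x ∂μ0| := by
    have := abs_sub_le (∫ x, f x ∂(ν : Measure X))
      (∑ k, cst k * ((ν : Measure X) (E k)).toReal) (∫ x, f x ∂μ0)
    have h4 := abs_sub_le (∑ k, cst k * ((ν : Measure X) (E k)).toReal)
      (∑ k, cst k * (μ0 (E k)).toReal) (∫ x, f x ∂μ0)
    linarith
  have hmν : η * ((ν : Measure X) univ).toReal ≤ η * M :=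
    mul_le_mul_of_nonneg_left h2 hηpos.le
  have hbb : |(∑ k, cst k * (μ0 (E k)).toReal) - ∫ x, f x ∂μ0| ≤ η * M0 := by
    rw [abs_sub_comm]; exact hb
  have hfinal : |(∫ x, f x ∂(ν : Measure X)) - ∫ x, f x ∂μ0| ≤ η * M + η + η * M0 := by
    have := ha.trans hmν
    linarith
  have : η * M + η + η * M0 < ε := by
    have hexp : η * (M + M0 + 2) = ε := by
      rw [hη]; field_simp
    nlinarith
  linarith


end RelEntAux

open Filter in
open scoped BoundedContinuousFunction in
theorem isCompact_relEnt_sublevel {X : Type*} [MeasurableSpace X] [TopologicalSpace X]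
    [PolishSpace X] [BorelSpace X]
    (m : Measure X) [IsFiniteMeasure m] (C : ℝ) :
    IsCompact {ν : FiniteMeasure X | relEnt ν.toMeasure m ≤ ENNReal.ofReal C} := by
  classical
  open RelEntAux Set Filter Topology in
  set S := {ν : FiniteMeasure X | relEnt ν.toMeasure m ≤ ENNReal.ofReal C} with hSdef
  set c : ℝ := (ENNReal.ofReal C).toReal with hcdef
  have hc0 : 0 ≤ c := ENNReal.toReal_nonneg
  have hcC : ENNReal.ofReal c = ENNReal.ofReal C := ENNReal.ofReal_toReal ENNReal.ofReal_ne_top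
  have hmem : ∀ ν : FiniteMeasure X, ν ∈ S →
      ν.toMeasure ≪ m ∧
      ∫⁻ x, ENNReal.ofReal (RelEntAux.phi ((ν.toMeasure.rnDeriv m x).toReal)) ∂m
        ≤ ENNReal.ofReal c := by
    intro ν hν
    simp only [hSdef, Set.mem_setOf_eq] at hν
    have hac : ν.toMeasure ≪ m := by
      by_contra h
      rw [relEnt, if_neg h] at hν
      exact ENNReal.ofReal_ne_top (top_le_iff.1 hν)
    refine ⟨hac, ?_⟩
    rw [relEnt, if_pos hac] at hν
    rw [hcC]
    exact hν
  set M : ℝ := Real.exp 2 * (m Set.univ).toReal + c with hMdef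
  have hM0 : 0 ≤ M := by positivity
  have hmass : ∀ ν : FiniteMeasure X, ν ∈ S → (ν.toMeasure Set.univ).toReal ≤ M := by
    intro ν hν
    obtain ⟨hac, hH⟩ := hmem ν hν
    have h1 := RelEntAux.meas_bound hac hH MeasurableSet.univ 0
    have hfin1 : ENNReal.ofReal (Real.exp (((0:ℕ):ℝ)+2)) * m Set.univ ≠ ⊤ :=
      ENNReal.mul_ne_top ENNReal.ofReal_ne_top (measure_ne_top m _)
    have hfin2 : ENNReal.ofReal c / (((0:ℕ):ℝ≥0∞)+1) ≠ ⊤ :=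
      (ENNReal.div_lt_top ENNReal.ofReal_ne_top (by simp)).ne
    have h2 := ENNReal.toReal_mono (ENNReal.add_ne_top.2 ⟨hfin1, hfin2⟩) h1
    have h3 : (ENNReal.ofReal (Real.exp (((0:ℕ):ℝ)+2)) * m Set.univ
        + ENNReal.ofReal c / (((0:ℕ):ℝ≥0∞)+1)).toReal = M := by
      rw [ENNReal.toReal_add hfin1 hfin2, ENNReal.toReal_mul,
        ENNReal.toReal_ofReal (Real.exp_pos _).le]
      norm_num [ENNReal.toReal_ofReal hc0, hMdef]
    rwa [h3] at h2
  rw [isCompact_iff_ultrafilter_le_nhds]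
  intro F hF
  have hevS : ∀ᶠ ν in ↑F, ν ∈ S := le_principal_iff.1 hF
  have hlimex : ∀ A : Set X, ∃ l : ℝ, l ∈ Set.Icc 0 M ∧
      Tendsto (fun ν : FiniteMeasure X => (ν.toMeasure A).toReal) ↑F (𝓝 l) := by
    intro A
    have hmemIcc : Set.Icc (0:ℝ) M ∈
        Ultrafilter.map (fun ν : FiniteMeasure X => (ν.toMeasure A).toReal) F := by
      refine Filter.mem_map.2 ?_
      filter_upwards [hevS] with ν hν
      exact ⟨ENNReal.toReal_nonneg,
        le_trans (ENNReal.toReal_mono (measure_ne_top _ _)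
          (measure_mono (Set.subset_univ A))) (hmass ν hν)⟩
    obtain ⟨l, hl1, hl2⟩ := isCompact_Icc.ultrafilter_le_nhds
      (Ultrafilter.map _ F) (le_principal_iff.2 hmemIcc)
    exact ⟨l, hl1, hl2⟩
  choose L hLmem hLtend using hlimex
  have hL0 : ∀ A, 0 ≤ L A := fun A => (hLmem A).1
  have hLempty : L ∅ = 0 := by
    refine tendsto_nhds_unique (hLtend ∅) ?_
    have h2 : (fun ν : FiniteMeasure X => (ν.toMeasure (∅:Set X)).toReal)
        = fun _ => (0:ℝ) := by
      funext ν; simp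
    rw [h2]
    exact tendsto_const_nhds
  have hLadd : ∀ A B : Set X, MeasurableSet A → MeasurableSet B → Disjoint A B →
      L (A ∪ B) = L A + L B := by
    intro A B hA hB hAB
    refine tendsto_nhds_unique (hLtend (A ∪ B)) ?_
    have heq : (fun ν : FiniteMeasure X => (ν.toMeasure (A ∪ B)).toReal)
        = fun ν : FiniteMeasure X => (ν.toMeasure A).toReal + (ν.toMeasure B).toReal := by
      funext ν
      rw [measure_union hAB hB, ENNReal.toReal_add (measure_ne_top _ _) (measure_ne_top _ _)]
    rw [heq]
    exact (hLtend A).add (hLtend B)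
  have hLbound : ∀ A : Set X, MeasurableSet A → ∀ j : ℕ,
      L A ≤ Real.exp ((j:ℝ)+2) * (m A).toReal + c/((j:ℝ)+1) := by
    intro A hA j
    refine le_of_tendsto (hLtend A) ?_
    filter_upwards [hevS] with ν hν
    obtain ⟨hac, hH⟩ := hmem ν hν
    have h1 := RelEntAux.meas_bound hac hH hA j
    have hfin1 : ENNReal.ofReal (Real.exp (((j:ℕ):ℝ)+2)) * m A ≠ ⊤ :=
      ENNReal.mul_ne_top ENNReal.ofReal_ne_top (measure_ne_top m _)
    have hfin2 : ENNReal.ofReal c / (((j:ℕ):ℝ≥0∞)+1) ≠ ⊤ :=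
      (ENNReal.div_lt_top ENNReal.ofReal_ne_top (by simp)).ne
    have h2 := ENNReal.toReal_mono (ENNReal.add_ne_top.2 ⟨hfin1, hfin2⟩) h1
    rw [ENNReal.toReal_add hfin1 hfin2, ENNReal.toReal_mul,
      ENNReal.toReal_ofReal (Real.exp_pos _).le, ENNReal.toReal_div,
      ENNReal.toReal_ofReal hc0] at h2
    have h3 : (((j:ℕ):ℝ≥0∞)+1).toReal = (j:ℝ)+1 := by
      rw [ENNReal.toReal_add (ENNReal.natCast_ne_top j) ENNReal.one_ne_top]
      simp
    rwa [h3] at h2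
  have hsmall : ∀ ε : ℝ, 0 < ε → ∃ δ, 0 < δ ∧
      ∀ A, MeasurableSet A → (m A).toReal < δ → L A ≤ ε := by
    intro ε hε
    obtain ⟨j, hj⟩ : ∃ j : ℕ, c/((j:ℝ)+1) ≤ ε/2 := by
      obtain ⟨j, hj⟩ := exists_nat_gt (2*c/ε)
      refine ⟨j, ?_⟩
      rw [div_le_iff₀ (by positivity)]
      rw [div_lt_iff₀ hε] at hj
      nlinarith
    refine ⟨ε/(2*Real.exp ((j:ℝ)+2)), by positivity, fun A hA hmA => ?_⟩
    have h1 := hLbound A hA j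
    have h3 : Real.exp ((j:ℝ)+2) * (m A).toReal
        < Real.exp ((j:ℝ)+2) * (ε/(2*Real.exp ((j:ℝ)+2))) :=
      mul_lt_mul_of_pos_left hmA (Real.exp_pos _)
    have h4 : Real.exp ((j:ℝ)+2) * (ε/(2*Real.exp ((j:ℝ)+2))) = ε/2 := by
      field_simp
    linarith
  set μ0 : Measure X := Measure.ofMeasurable (fun A _ => ENNReal.ofReal (L A))
    (by simp [hLempty])
    (by
      intro f hf hd
      have htend := RelEntAux.L_tendsto_sum (m := m) L hL0 hLadd hsmall f hf hd
      have hsum : HasSum (fun i => L (f i)) (L (⋃ i, f i)) :=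
        (hasSum_iff_tendsto_nat_of_nonneg (fun i => hL0 _) _).2 htend
      show ENNReal.ofReal (L (⋃ i, f i)) = ∑' i, ENNReal.ofReal (L (f i))
      rw [← hsum.tsum_eq]
      exact ENNReal.ofReal_tsum_of_nonneg (fun i => hL0 _) hsum.summable) with hμ0def
  have hμ0ap : ∀ A : Set X, MeasurableSet A → μ0 A = ENNReal.ofReal (L A) :=
    fun A hA => Measure.ofMeasurable_apply A hA
  haveI hμ0fin : IsFiniteMeasure μ0 :=
    ⟨by rw [hμ0ap Set.univ MeasurableSet.univ]; exact ENNReal.ofReal_lt_top⟩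
  have hμ0ac : μ0 ≪ m := by
    refine Measure.AbsolutelyContinuous.mk (fun A hA h0 => ?_)
    rw [hμ0ap A hA]
    have hle : ∀ j : ℕ, L A ≤ c/((j:ℝ)+1) := by
      intro j
      have h1 := hLbound A hA j
      rw [h0] at h1
      simpa using h1
    have htend : Tendsto (fun j : ℕ => c/((j:ℝ)+1)) atTop (𝓝 0) := by
      have h1 := (tendsto_const_div_atTop_nhds_zero_nat c).comp (tendsto_add_atTop_nat 1)
      refine h1.congr (fun j => ?_)
      simp only [Function.comp_apply]
      push_cast
      ring
    have hL0' : L A ≤ 0 := ge_of_tendsto' htend hle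
    have : L A = 0 := le_antisymm hL0' (hL0 A)
    simp [this]
  have hLA : ∀ A : Set X, MeasurableSet A → (μ0 A).toReal = L A := by
    intro A hA; rw [hμ0ap _ hA, ENNReal.toReal_ofReal (hL0 _)]
  have hpartL : ∀ (n : ℕ) (A : Fin n → Set X), (∀ i, MeasurableSet (A i)) →
      Pairwise (Function.onFun Disjoint A) → (⋃ i, A i) = Set.univ →
      ∑ i, RelEntAux.phi ((μ0 (A i)).toReal / (m (A i)).toReal) * (m (A i)).toReal ≤ c := by
    intro n A hAm hAd hAc
    have htendsum : Tendsto (fun ν : FiniteMeasure X =>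
        ∑ i, RelEntAux.phi ((ν.toMeasure (A i)).toReal / (m (A i)).toReal)
          * (m (A i)).toReal) ↑F
        (𝓝 (∑ i, RelEntAux.phi (L (A i) / (m (A i)).toReal) * (m (A i)).toReal)) := by
      refine tendsto_finset_sum _ (fun i _ => ?_)
      have hcont : Continuous
          (fun r : ℝ => RelEntAux.phi (r / (m (A i)).toReal) * (m (A i)).toReal) :=
        (RelEntAux.phi_continuous.comp (continuous_id.div_const _)).mul continuous_const
      exact (hcont.tendsto _).comp (hLtend (A i))
    have hle : ∀ᶠ ν : FiniteMeasure X in ↑F,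
        ∑ i, RelEntAux.phi ((ν.toMeasure (A i)).toReal / (m (A i)).toReal)
          * (m (A i)).toReal ≤ c := by
      filter_upwards [hevS] with ν hν
      obtain ⟨hac, hH⟩ := hmem ν hν
      exact RelEntAux.jensen_partition hac hc0 hH hAm hAd hAc
    have hres := le_of_tendsto htendsum hle
    have hrw : ∀ i : Fin n, (μ0 (A i)).toReal = L (A i) := fun i => hLA _ (hAm i)
    simp only [hrw]
    exact hres
  have hent : relEnt μ0 m ≤ ENNReal.ofReal C := by
    rw [relEnt, if_pos hμ0ac, ← hcC]
    exact RelEntAux.entropy_bound_of_partition hμ0ac hc0 hpartL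
  refine ⟨⟨μ0, hμ0fin⟩, hent, ?_⟩
  have hmassev : ∀ᶠ ν : FiniteMeasure X in ↑F, (ν.toMeasure Set.univ).toReal ≤ M := by
    filter_upwards [hevS] with ν hν
    exact hmass ν hν
  have hLtend' : ∀ A : Set X, MeasurableSet A →
      Tendsto (fun ν : FiniteMeasure X => (ν.toMeasure A).toReal) ↑F (𝓝 ((μ0 A).toReal)) := by
    intro A hA
    rw [hLA A hA]
    exact hLtend A
  have hweak : ∀ f : X →ᵇ ℝ,
      Tendsto (fun ν : FiniteMeasure X => ∫ x, f x ∂(ν.toMeasure)) ↑F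
        (𝓝 (∫ x, f x ∂μ0)) := fun f =>
    RelEntAux.tendsto_integral_of_setwise hM0 hmassev hLtend' f
  have htendid : Tendsto (id : FiniteMeasure X → FiniteMeasure X) ↑F
      (𝓝 (⟨μ0, hμ0fin⟩ : FiniteMeasure X)) := by
    refine (FiniteMeasure.tendsto_iff_forall_integral_tendsto
      (μ := (⟨μ0, hμ0fin⟩ : FiniteMeasure X))).2 ?_
    intro f
    exact hweak f
  rwa [Filter.tendsto_id'] at htendid
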